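/- Let x ∈ X with p(x) ∈ ℝ. The following statements are equivalent: (i) ∂p(x) = C(x); (ii) reverse strong robust duality holds at every x* ∈ ∂p(x), i.e., for every x* ∈ ∂p(x) the infimum of p − x* over X is attained and p*(x*) = q(x*); (iii) robust duality holds at every x* ∈ ∂p(x), i.e., p*(x*) = q(x*) for every x* ∈ ∂p(x). Here C(x) := ⋂_{η>0} ⋃_{ε₁,ε₂≥0, ε₁+ε₂=η} ⋃_{u∈I^{ε₁}(x)} proj^u_{X*} ∂^{ε₂}F_u(x, 0_u). -/

import Mathlib

noncomputable section

namespace RobustDuality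

/-- The set of `ε`-minimizers of an extended-real-valued function `h`:
`{z | h z ∈ ℝ ∧ h z ≤ inf h + ε}` (empty when `inf h ∉ ℝ`). -/
def epsArgmin {Z : Type*} (h : Z → EReal) (ε : ℝ) : Set Z :=
  {z | (∃ r : ℝ, h z = (r : EReal)) ∧ h z ≤ (⨅ w, h w) + (ε : EReal)}

variable {X : Type*} [AddCommGroup X] [Module ℝ X] [TopologicalSpace X]
  [IsTopologicalAddGroup X] [ContinuousSMul ℝ X] [LocallyConvexSpace ℝ X] [T2Space X]

/-- `(M^ε h)(x*) := ε-argmin (h - x*)` for `h : X → EReal` and `x* ∈ X*`. -/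
def M1 (h : X → EReal) (ε : ℝ) (xs : X →L[ℝ] ℝ) : Set X :=
  epsArgmin (fun x => h x - ((xs x : ℝ) : EReal)) ε

/-- Fenchel conjugate of `h : X → EReal`. -/
def conj1 (h : X → EReal) (xs : X →L[ℝ] ℝ) : EReal :=
  ⨆ x : X, ((xs x : ℝ) : EReal) - h x

/-- `ε`-subdifferential of `h : X → EReal` at `a`. -/
def epsSubdiff1 (h : X → EReal) (ε : ℝ) (a : X) : Set (X →L[ℝ] ℝ) :=
  {xs | (∃ r : ℝ, h a = (r : EReal)) ∧
    ∀ x, h a + ((xs x - xs a - ε : ℝ) : EReal) ≤ h x}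

section Pair

variable {Yu : Type*} [AddCommGroup Yu] [Module ℝ Yu] [TopologicalSpace Yu]
  [IsTopologicalAddGroup Yu] [ContinuousSMul ℝ Yu] [LocallyConvexSpace ℝ Yu] [T2Space Yu]

/-- Fenchel conjugate of `F : X × Y → EReal` at `(x*, y*)`. -/
def conj2 (F : X × Yu → EReal) (xs : X →L[ℝ] ℝ) (ys : Yu →L[ℝ] ℝ) : EReal :=
  ⨆ z : X × Yu, ((xs z.1 + ys z.2 : ℝ) : EReal) - F z

/-- `(M^ε F)(x*, y*) := ε-argmin (F - (x*, y*))`. -/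
def M2 (F : X × Yu → EReal) (ε : ℝ) (xs : X →L[ℝ] ℝ) (ys : Yu →L[ℝ] ℝ) : Set (X × Yu) :=
  epsArgmin (fun z => F z - ((xs z.1 + ys z.2 : ℝ) : EReal)) ε

/-- `ε`-subdifferential of `F : X × Y → EReal` at `a`, as a set of dual pairs. -/
def epsSubdiff2 (F : X × Yu → EReal) (ε : ℝ) (a : X × Yu) :
    Set ((X →L[ℝ] ℝ) × (Yu →L[ℝ] ℝ)) :=
  {zs | (∃ r : ℝ, F a = (r : EReal)) ∧
    ∀ z, F a + ((zs.1 z.1 + zs.2 z.2 - zs.1 a.1 - zs.2 a.2 - ε : ℝ) : EReal) ≤ F z}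

end Pair

variable {U : Type*} {Y : U → Type*} [∀ u, AddCommGroup (Y u)] [∀ u, Module ℝ (Y u)]
  [∀ u, TopologicalSpace (Y u)] [∀ u, IsTopologicalAddGroup (Y u)]
  [∀ u, ContinuousSMul ℝ (Y u)] [∀ u, LocallyConvexSpace ℝ (Y u)] [∀ u, T2Space (Y u)]

/-- The robust objective `p := sup_{u ∈ U} F_u (·, 0_u)`. -/
def pRob (F : ∀ u, X × Y u → EReal) (x : X) : EReal := ⨆ u, F u (x, 0)

/-- `q := inf over u ∈ U and y* ∈ Y_u* of F_u*(·, y*)`. -/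
def qRob (F : ∀ u, X × Y u → EReal) (xs : X →L[ℝ] ℝ) : EReal :=
  ⨅ (u : U) (ys : Y u →L[ℝ] ℝ), conj2 (F u) xs ys

/-- `S^ε(x*) := {x : p x ∈ ℝ ∧ p x - ⟨x*, x⟩ ≤ -q x* + ε}`. -/
def Sset (F : ∀ u, X × Y u → EReal) (ε : ℝ) (xs : X →L[ℝ] ℝ) : Set X :=
  {x | (∃ r : ℝ, pRob F x = (r : EReal)) ∧
    pRob F x - ((xs x : ℝ) : EReal) ≤ -qRob F xs + (ε : EReal)}

/-- `J^ε(u) := {x : p x ∈ ℝ ∧ p x ≤ F_u(x, 0) + ε}`. -/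
def Jset (F : ∀ u, X × Y u → EReal) (ε : ℝ) (u : U) : Set X :=
  {x | (∃ r : ℝ, pRob F x = (r : EReal)) ∧ pRob F x ≤ F u (x, 0) + (ε : EReal)}

/-- `A^{(ε₁,ε₂)}_{(u,y*)}(x*) := {x ∈ J^{ε₁}(u) : (x, 0) ∈ (M^{ε₂}F_u)(x*, y*)}`. -/
def Aset (F : ∀ u, X × Y u → EReal) (ε₁ ε₂ : ℝ) (u : U) (ys : Y u →L[ℝ] ℝ)
    (xs : X →L[ℝ] ℝ) : Set X :=
  {x | x ∈ Jset F ε₁ u ∧ (x, (0 : Y u)) ∈ M2 (F u) ε₂ xs ys}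

/-- `𝒜^ε(x*)`. -/
def calA (F : ∀ u, X × Y u → EReal) (ε : ℝ) (xs : X →L[ℝ] ℝ) : Set X :=
  ⋂ (η : ℝ) (_ : 0 < η),
    ⋃ (u : U) (ys : Y u →L[ℝ] ℝ) (ε₁ : ℝ) (ε₂ : ℝ)
      (_ : 0 ≤ ε₁) (_ : 0 ≤ ε₂) (_ : ε₁ + ε₂ = ε + η), Aset F ε₁ ε₂ u ys xs

/-- `B^ε_{(u,y*)}(x*)`. -/
def Bset (F : ∀ u, X × Y u → EReal) (ε : ℝ) (u : U) (ys : Y u →L[ℝ] ℝ)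
    (xs : X →L[ℝ] ℝ) : Set X :=
  ⋃ (ε₁ : ℝ) (ε₂ : ℝ) (_ : 0 ≤ ε₁) (_ : 0 ≤ ε₂) (_ : ε₁ + ε₂ = ε),
    Aset F ε₁ ε₂ u ys xs

/-- `B^ε(x*) := ⋃_{u, y*} B^ε_{(u,y*)}(x*)`. -/
def BsetAll (F : ∀ u, X × Y u → EReal) (ε : ℝ) (xs : X →L[ℝ] ℝ) : Set X :=
  ⋃ (u : U) (ys : Y u →L[ℝ] ℝ), Bset F ε u ys xs

/-- `I^ε(x)`: the set of `ε`-active indices at `x`. -/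
def Iset (F : ∀ u, X × Y u → EReal) (ε : ℝ) (x : X) : Set U :=
  {u | (∃ r : ℝ, pRob F x = (r : EReal)) ∧ pRob F x - (ε : EReal) ≤ F u (x, 0)}

/-- `C^ε(x)`. -/
def Cset (F : ∀ u, X × Y u → EReal) (ε : ℝ) (x : X) : Set (X →L[ℝ] ℝ) :=
  ⋂ (η : ℝ) (_ : 0 < η),
    ⋃ (ε₁ : ℝ) (ε₂ : ℝ) (_ : 0 ≤ ε₁) (_ : 0 ≤ ε₂) (_ : ε₁ + ε₂ = ε + η)
      (u : U) (_ : u ∈ Iset F ε₁ x),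
      Prod.fst '' epsSubdiff2 (F u) ε₂ (x, (0 : Y u))

/-- `D^ε(x)`. -/
def Dset (F : ∀ u, X × Y u → EReal) (ε : ℝ) (x : X) : Set (X →L[ℝ] ℝ) :=
  ⋃ (ε₁ : ℝ) (ε₂ : ℝ) (_ : 0 ≤ ε₁) (_ : 0 ≤ ε₂) (_ : ε₁ + ε₂ = ε)
    (u : U) (_ : u ∈ Iset F ε₁ x),
    Prod.fst '' epsSubdiff2 (F u) ε₂ (x, (0 : Y u))

/-- The exact active index set `I(x) := {u : F_u(x,0) = p(x)}` (when `p(x) ∈ ℝ`). -/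
def I0set (F : ∀ u, X × Y u → EReal) (x : X) : Set U :=
  {u | (∃ r : ℝ, pRob F x = (r : EReal)) ∧ F u (x, 0) = pRob F x}

/-- `D(x) := ⋃_{u ∈ I(x)} proj_{X*} ∂F_u(x, 0)`. -/
def D0set (F : ∀ u, X × Y u → EReal) (x : X) : Set (X →L[ℝ] ℝ) :=
  ⋃ (u : U) (_ : u ∈ I0set F x), Prod.fst '' epsSubdiff2 (F u) 0 (x, (0 : Y u))

/-- `B_{(u,y*)}(x*) := {x ∈ J(u) : (x, 0) ∈ (M F_u)(x*, y*)}`. -/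
def B0set (F : ∀ u, X × Y u → EReal) (u : U) (ys : Y u →L[ℝ] ℝ)
    (xs : X →L[ℝ] ℝ) : Set X :=
  {x | (∃ r : ℝ, pRob F x = (r : EReal)) ∧ F u (x, 0) = pRob F x ∧
    (x, (0 : Y u)) ∈ M2 (F u) 0 xs ys}


private lemma ereal_trichotomy (a : EReal) : a = ⊥ ∨ (∃ d : ℝ, a = (d : EReal)) ∨ a = ⊤ := by
  induction a using EReal.rec with
  | bot => exact Or.inl rfl
  | coe d => exact Or.inr (Or.inl ⟨d, rfl⟩)
  | top => exact Or.inr (Or.inr rfl)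

private lemma ereal_exists_real {a : EReal} (hb : a ≠ ⊥) {c : ℝ} (h : a ≤ (c : EReal)) :
    ∃ d : ℝ, a = (d : EReal) := by
  rcases ereal_trichotomy a with h1 | h1 | h1
  · exact absurd h1 hb
  · exact h1
  · rw [h1] at h; exact absurd h (by simp)

private lemma ereal_coe_le_of_forall {c : ℝ} {a : EReal}
    (h : ∀ η : ℝ, 0 < η → ((c - η : ℝ) : EReal) ≤ a) : (c : EReal) ≤ a := by
  rcases ereal_trichotomy a with h1 | ⟨d, h1⟩ | h1
  · have := h 1 one_pos
    rw [h1, le_bot_iff] at this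
    exact absurd this (EReal.coe_ne_bot _)
  · subst h1
    have h' : ∀ η : ℝ, 0 < η → c ≤ d + η := fun η hη => by
      have := h η hη; rw [EReal.coe_le_coe_iff] at this; linarith
    exact_mod_cast le_of_forall_pos_le_add h'
  · rw [h1]; exact le_top

private lemma ereal_le_coe_of_forall {c : ℝ} {a : EReal}
    (h : ∀ η : ℝ, 0 < η → a ≤ ((c + η : ℝ) : EReal)) : a ≤ (c : EReal) := by
  rcases ereal_trichotomy a with h1 | ⟨d, h1⟩ | h1
  · rw [h1]; exact bot_le
  · subst h1
    have h' : ∀ η : ℝ, 0 < η → d ≤ c + η := fun η hη => by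
      have := h η hη; exact_mod_cast this
    exact_mod_cast le_of_forall_pos_le_add h'
  · have := h 1 one_pos
    rw [h1, top_le_iff] at this
    exact absurd this (EReal.coe_ne_top _)

private lemma weak_duality (F : ∀ u, X × Y u → EReal)
    (xs : X →L[ℝ] ℝ) : conj1 (pRob F) xs ≤ qRob F xs := by
  rw [qRob]
  refine le_iInf fun u => le_iInf fun ys => ?_
  rw [conj1, conj2]
  refine iSup_le fun z => ?_
  refine le_trans ?_ (le_iSup (fun w : X × Y u => ((xs w.1 + ys w.2 : ℝ) : EReal) - F u w)
    ((z, (0 : Y u)) : X × Y u))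
  simp only [map_zero, add_zero]
  exact EReal.sub_le_sub le_rfl (le_iSup (fun u => F u (z, 0)) u)

private lemma conj_ge (F : ∀ u, X × Y u → EReal) {x : X} {r : ℝ}
    (hr : pRob F x = (r : EReal)) (xs : X →L[ℝ] ℝ) :
    ((xs x - r : ℝ) : EReal) ≤ conj1 (pRob F) xs := by
  rw [conj1]
  have h2 := le_iSup (fun z : X => ((xs z : ℝ) : EReal) - pRob F z) x
  rw [hr] at h2
  exact le_trans (le_of_eq (by norm_cast)) h2

private lemma conj_eq (F : ∀ u, X × Y u → EReal) {x : X} {r : ℝ}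
    (hr : pRob F x = (r : EReal)) {xs : X →L[ℝ] ℝ}
    (hxs : xs ∈ epsSubdiff1 (pRob F) 0 x) :
    conj1 (pRob F) xs = ((xs x - r : ℝ) : EReal) := by
  refine le_antisymm ?_ (conj_ge F hr xs)
  rw [conj1]
  refine iSup_le fun z => ?_
  have h := hxs.2 z
  rw [hr] at h
  rcases ereal_trichotomy (pRob F z) with hpz | ⟨d, hpz⟩ | hpz
  · rw [hpz, le_bot_iff] at h
    exact absurd h (by norm_cast)
  · rw [hpz] at h ⊢
    norm_cast at h ⊢
    linarith
  · rw [hpz]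
    simp

private lemma C_subset_subdiff (F : ∀ u, X × Y u → EReal) {x : X} {r : ℝ}
    (hr : pRob F x = (r : EReal)) :
    Cset F 0 x ⊆ epsSubdiff1 (pRob F) 0 x := by
  intro xs hxs
  simp only [Cset, Set.mem_iInter, Set.mem_iUnion] at hxs
  refine ⟨⟨r, hr⟩, fun z => ?_⟩
  rw [hr]
  have key : ∀ η : ℝ, 0 < η → ((r + (xs z - xs x - 0) - η : ℝ) : EReal) ≤ pRob F z := by
    intro η hη
    obtain ⟨ε₁, ε₂, hε₁, hε₂, hsum, u, hu, zs, hmem, hproj⟩ := hxs η hη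
    obtain ⟨xs', ys⟩ := zs
    rw [show (xs', ys).1 = xs' from rfl] at hproj
    subst hproj
    rw [zero_add] at hsum
    have h1 : ((r - ε₁ : ℝ) : EReal) ≤ F u (x, 0) := by
      have h1' := hu.2
      rw [hr] at h1'
      exact le_trans (le_of_eq (by norm_cast)) h1'
    have h2 := hmem.2 ((z, (0 : Y u)) : X × Y u)
    simp only [map_zero] at h2
    have h3 : ((r - ε₁ : ℝ) : EReal) + ((xs' z + 0 - xs' x - 0 - ε₂ : ℝ) : EReal) ≤
        F u (z, 0) := le_trans (add_le_add h1 le_rfl) h2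
    have h4 : F u (z, 0) ≤ pRob F z := le_iSup (fun u => F u (z, 0)) u
    refine le_trans (le_of_eq ?_) (le_trans h3 h4)
    rw [← EReal.coe_add, EReal.coe_eq_coe_iff]
    ring_nf
    linarith
  have key2 := ereal_coe_le_of_forall key
  exact le_trans (le_of_eq (by norm_cast)) key2

private lemma q_le_of_memC (F : ∀ u, X × Y u → EReal) (hF : ∀ u z, F u z ≠ ⊥)
    {x : X} {r : ℝ} (hr : pRob F x = (r : EReal)) {xs : X →L[ℝ] ℝ}
    (hxs : xs ∈ Cset F 0 x) : qRob F xs ≤ conj1 (pRob F) xs := by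
  simp only [Cset, Set.mem_iInter, Set.mem_iUnion] at hxs
  have hq : qRob F xs ≤ ((xs x - r : ℝ) : EReal) := by
    refine ereal_le_coe_of_forall fun η hη => ?_
    obtain ⟨ε₁, ε₂, hε₁, hε₂, hsum, u, hu, zs, hmem, hproj⟩ := hxs η hη
    obtain ⟨xs', ys⟩ := zs
    rw [show (xs', ys).1 = xs' from rfl] at hproj
    subst hproj
    rw [zero_add] at hsum
    obtain ⟨c, hcr⟩ := hmem.1
    have hcge : r - ε₁ ≤ c := by
      have h1' := hu.2
      rw [hr, hcr] at h1'
      have : ((r - ε₁ : ℝ) : EReal) ≤ (c : EReal) :=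
        le_trans (le_of_eq (by norm_cast)) h1'
      exact_mod_cast this
    rw [qRob]
    refine le_trans (iInf_le _ u) (le_trans (iInf_le _ ys) ?_)
    rw [conj2]
    refine iSup_le fun z => ?_
    have h2 := hmem.2 z
    rw [hcr] at h2
    simp only [map_zero] at h2
    rcases ereal_trichotomy (F u z) with hFz | ⟨d, hFz⟩ | hFz
    · exact absurd hFz (hF u z)
    · rw [hFz] at h2 ⊢
      norm_cast at h2 ⊢
      linarith
    · rw [hFz]
      simp
  exact le_trans hq (conj_ge F hr xs)

private lemma subdiff_subset_C (F : ∀ u, X × Y u → EReal) (hF : ∀ u z, F u z ≠ ⊥)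
    {x : X} {r : ℝ} (hr : pRob F x = (r : EReal)) {xs : X →L[ℝ] ℝ}
    (hxs : xs ∈ epsSubdiff1 (pRob F) 0 x)
    (hq : conj1 (pRob F) xs = qRob F xs) : xs ∈ Cset F 0 x := by
  simp only [Cset, Set.mem_iInter, Set.mem_iUnion]
  intro η hη
  have hc : conj1 (pRob F) xs = ((xs x - r : ℝ) : EReal) := conj_eq F hr hxs
  have hql : qRob F xs < ((xs x - r + η / 2 : ℝ) : EReal) := by
    rw [← hq, hc]
    exact_mod_cast (by linarith : xs x - r < xs x - r + η / 2)
  rw [qRob] at hql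
  obtain ⟨u, hu⟩ := iInf_lt_iff.1 hql
  obtain ⟨ys, hys⟩ := iInf_lt_iff.1 hu
  rw [conj2] at hys
  have hterm : ∀ z : X × Y u,
      ((xs z.1 + ys z.2 : ℝ) : EReal) - F u z < ((xs x - r + η / 2 : ℝ) : EReal) :=
    fun z => lt_of_le_of_lt
      (le_iSup (fun w : X × Y u => ((xs w.1 + ys w.2 : ℝ) : EReal) - F u w) z) hys
  have hFle : F u (x, 0) ≤ (r : EReal) := by
    rw [← hr]; exact le_iSup (fun u => F u (x, 0)) u
  obtain ⟨c, hcr⟩ := ereal_exists_real (hF u _) hFle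
  have hcle : c ≤ r := by rw [hcr] at hFle; exact_mod_cast hFle
  have h1 : r - η / 2 < c := by
    have h := hterm ((x, (0 : Y u)) : X × Y u)
    rw [hcr] at h
    simp only [map_zero, add_zero] at h
    norm_cast at h
    linarith
  refine ⟨η / 2, η / 2, by linarith, by linarith, by ring, u, ?_, ?_⟩
  · refine ⟨⟨r, hr⟩, ?_⟩
    rw [hr, hcr]
    exact le_trans (le_of_eq (by norm_cast)) (by exact_mod_cast (by linarith : r - η / 2 ≤ c))
  · refine ⟨(xs, ys), ⟨⟨c, hcr⟩, fun z => ?_⟩, rfl⟩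
    have h2 := hterm z
    rw [hcr]
    simp only [map_zero]
    rcases ereal_trichotomy (F u z) with hFz | ⟨d, hFz⟩ | hFz
    · exact absurd hFz (hF u z)
    · rw [hFz] at h2 ⊢
      norm_cast at h2 ⊢
      linarith
    · rw [hFz]
      simp

/-- Theorem 8.1. -/
theorem subdiff_eq_Cset_iff
    (F : ∀ u, X × Y u → EReal) (hU : Nonempty U) (hF : ∀ u z, F u z ≠ ⊥)
    (x : X) (hx : ∃ r : ℝ, pRob F x = (r : EReal)) :
    List.TFAE
      [epsSubdiff1 (pRob F) 0 x = Cset F 0 x,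
       ∀ xs ∈ epsSubdiff1 (pRob F) 0 x,
         (∃ xbar : X, pRob F xbar - ((xs xbar : ℝ) : EReal) =
            ⨅ z : X, (pRob F z - ((xs z : ℝ) : EReal))) ∧
         conj1 (pRob F) xs = qRob F xs,
       ∀ xs ∈ epsSubdiff1 (pRob F) 0 x, conj1 (pRob F) xs = qRob F xs] := by
  obtain ⟨r, hr⟩ := hx
  tfae_have 2 → 3 := fun h xs hxs => (h xs hxs).2
  tfae_have 3 → 2 := by
    intro h xs hxs
    refine ⟨⟨x, le_antisymm (le_iInf fun z => ?_) (iInf_le _ x)⟩, h xs hxs⟩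
    have hz := hxs.2 z
    rw [hr] at hz ⊢
    rcases ereal_trichotomy (pRob F z) with hpz | ⟨d, hpz⟩ | hpz
    · rw [hpz, le_bot_iff] at hz
      exact absurd hz (by norm_cast)
    · rw [hpz] at hz ⊢
      norm_cast at hz ⊢
      linarith
    · rw [hpz, EReal.top_sub_coe]
      exact le_top
  tfae_have 1 → 3 := by
    intro h1 xs hxs
    refine le_antisymm (weak_duality F xs) ?_
    exact q_le_of_memC F hF hr (h1 ▸ hxs)
  tfae_have 3 → 1 := by
    intro h3
    ext xs
    constructor
    · intro hxs
      exact subdiff_subset_C F hF hr hxs (h3 xs hxs)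
    · intro hxs
      exact C_subset_subdiff F hr hxs
  tfae_finish


end RobustDuality
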